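/- Assume that S(h) : Φ → Φ is continuous for every h ∈ 𝒞 and that K ⊆ Φ is a compact (𝔹,Σ)-attracting set with K ∈ 𝔹. Then ω(K) is a (𝔹,Σ)-attractor of the semigroup and ω(K) = 𝒦|₀. -/
import Mathlib


open Metric Filter Topology

noncomputable section

/-- The ω-limit set of a set `B` under the multi-parametric semigroup `S`
with time arrow `Sig`. -/
def omegaSet {m : ℕ} {Φ : Type*} [MetricSpace Φ]
    (S : EuclideanSpace ℝ (Fin m) → Φ → Φ) (Sig : Set (EuclideanSpace ℝ (Fin m)))
    (B : Set Φ) : Set Φ :=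
  {u₀ | ∃ (h : ℕ → EuclideanSpace ℝ (Fin m)) (u : ℕ → Φ),
    (∀ n, h n ∈ Sig) ∧
    Tendsto (fun n => infDist (h n) (frontier Sig)) atTop atTop ∧
    (∀ n, u n ∈ B) ∧
    Tendsto (fun n => S (h n) (u n)) atTop (𝓝 u₀)}

/-- `K` is a `(𝔹,Σ)`-attracting set for the semigroup `S`. -/
def IsAttractingSet {m : ℕ} {Φ : Type*} [MetricSpace Φ]
    (S : EuclideanSpace ℝ (Fin m) → Φ → Φ) (Sig : Set (EuclideanSpace ℝ (Fin m)))
    (Bor : Set (Set Φ)) (K : Set Φ) : Prop :=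
  ∀ B ∈ Bor, ∀ ε : ℝ, 0 < ε → ∃ D : ℝ, 0 < D ∧
    ∀ h ∈ Sig, infDist h (frontier Sig) ≥ D → S h '' B ⊆ thickening ε K

/-- `A` is a `(𝔹,Σ)`-attractor: compact, strictly invariant and `(𝔹,Σ)`-attracting. -/
def IsAttractor {m : ℕ} {Φ : Type*} [MetricSpace Φ]
    (S : EuclideanSpace ℝ (Fin m) → Φ → Φ) (C Sig : Set (EuclideanSpace ℝ (Fin m)))
    (Bor : Set (Set Φ)) (A : Set Φ) : Prop :=
  IsCompact A ∧ (∀ h ∈ C, S h '' A = A) ∧ IsAttractingSet S Sig Bor A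

/-- `u : ℝ^m → Φ` is a complete bounded trajectory of the semigroup `S` over the cone `C`,
with respect to the bornology `Bor`. -/
def IsCompleteBoundedTrajectory {m : ℕ} {Φ : Type*} [MetricSpace Φ]
    (S : EuclideanSpace ℝ (Fin m) → Φ → Φ) (C : Set (EuclideanSpace ℝ (Fin m)))
    (Bor : Set (Set Φ)) (u : EuclideanSpace ℝ (Fin m) → Φ) : Prop :=
  (∀ h ∈ C, ∀ s, S h (u s) = u (s + h)) ∧ ∃ Bu ∈ Bor, Set.range u ⊆ Bu

section Aux

variable {m : ℕ} {Φ : Type*} [MetricSpace Φ]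
  {C Sig : Set (EuclideanSpace ℝ (Fin m))}
  {S : EuclideanSpace ℝ (Fin m) → Φ → Φ} {Bor : Set (Set Φ)} {K : Set Φ}

lemma aux_cast_tendsto : Tendsto (fun n : ℕ => (n:ℝ)+1) atTop atTop :=
  tendsto_atTop_add_const_right _ 1 tendsto_natCast_atTop_atTop

lemma aux_tendsto_div : Tendsto (fun n : ℕ => 2 / ((n:ℝ)+1)) atTop (𝓝 0) :=
  tendsto_const_nhds.div_atTop aux_cast_tendsto

lemma aux_inv_div_tendsto : Tendsto (fun n : ℕ => 1/((n:ℝ)+1)) atTop (𝓝 0) :=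
  tendsto_const_nhds.div_atTop aux_cast_tendsto

lemma aux_ball_subset {m : ℕ} {Sig : Set (EuclideanSpace ℝ (Fin m))}
    {h : EuclideanSpace ℝ (Fin m)} {D : ℝ} (hD : 0 < D) (hh : h ∈ Sig)
    (hd : infDist h (frontier Sig) ≥ D) : ball h D ⊆ Sig := by
  have hnofr : ∀ x ∈ ball h D, x ∉ frontier Sig := by
    intro x hx hxf
    have h1 : infDist h (frontier Sig) ≤ dist h x := infDist_le_dist_of_mem hxf
    have h2 : dist h x < D := by rw [mem_ball, dist_comm] at hx; exact hx
    linarith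
  have hhint : h ∈ interior Sig := by
    have hcl : h ∈ closure Sig := subset_closure hh
    rw [closure_eq_interior_union_frontier] at hcl
    rcases hcl with h1 | h1
    · exact h1
    · exact absurd h1 (hnofr h (mem_ball_self hD))
  have hsub : ball h D ⊆ interior Sig ∪ interior Sigᶜ := by
    intro x hx
    by_cases hc : x ∈ closure Sig
    · rw [closure_eq_interior_union_frontier] at hc
      rcases hc with h1 | h1
      · exact Or.inl h1
      · exact absurd h1 (hnofr x hx)
    · right
      rw [interior_compl]
      exact hc
  have hconn : IsPreconnected (ball h D) := (convex_ball h D).isPreconnected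
  have := hconn.subset_left_of_subset_union isOpen_interior isOpen_interior
    (by
      refine Set.disjoint_left.2 fun x hx1 hx2 => ?_
      exact (interior_subset hx2 : x ∈ Sigᶜ) (interior_subset hx1))
    hsub ⟨h, mem_ball_self hD, hhint⟩
  exact this.trans interior_subset

lemma aux_mem_omega {z : Φ}
    (key : ∀ n : ℕ, ∃ H ∈ Sig, ∃ U ∈ K,
      ((n:ℝ)+1) ≤ infDist H (frontier Sig) ∧ dist (S H U) z < 2/((n:ℝ)+1)) :
    z ∈ omegaSet S Sig K := by
  choose H hH U hU h1 h2 using key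
  refine ⟨H, U, hH, tendsto_atTop_mono h1 aux_cast_tendsto, hU, ?_⟩
  rw [tendsto_iff_dist_tendsto_zero]
  exact squeeze_zero (fun n => dist_nonneg) (fun n => le_of_lt (h2 n)) aux_tendsto_div

lemma aux_omega_subset (hKc : IsClosed K)
    (hKattr : IsAttractingSet S Sig Bor K) (hKBor : K ∈ Bor) :
    omegaSet S Sig K ⊆ K := by
  rintro z ⟨h, u, hSig, hinf, hu, htend⟩
  have hne : K.Nonempty := ⟨u 0, hu 0⟩
  have hlim : Tendsto (fun n => infDist (S (h n) (u n)) K) atTop (𝓝 (infDist z K)) :=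
    ((continuous_infDist_pt K).tendsto z).comp htend
  have hle : ∀ δ : ℝ, 0 < δ → infDist z K ≤ δ := by
    intro δ hδ
    obtain ⟨D, hD, hattr⟩ := hKattr K hKBor δ hδ
    have hev : ∀ᶠ n in atTop, infDist (S (h n) (u n)) K ≤ δ := by
      filter_upwards [hinf.eventually_ge_atTop D] with n hn
      have := hattr (h n) (hSig n) hn ⟨u n, hu n, rfl⟩
      rw [mem_thickening_iff] at this
      obtain ⟨y, hy, hdy⟩ := this
      exact le_of_lt (lt_of_le_of_lt (infDist_le_dist_of_mem hy) hdy)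
    exact le_of_tendsto hlim hev
  have h0 : infDist z K = 0 :=
    le_antisymm (le_of_forall_pos_le_add (by simpa using hle)) infDist_nonneg
  exact (hKc.mem_iff_infDist_zero hne).2 h0

lemma aux_omega_closed : IsClosed (omegaSet S Sig K) := by
  refine isClosed_of_closure_subset fun z hz => ?_
  refine aux_mem_omega fun n => ?_
  obtain ⟨y, hy, hdzy⟩ := Metric.mem_closure_iff.1 hz (1/((n:ℝ)+1)) (by positivity)
  obtain ⟨h, u, hSig, hinf, hu, ht⟩ := hy
  obtain ⟨j, hj1, hj2⟩ := ((hinf.eventually_ge_atTop ((n:ℝ)+1)).and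
    (ht (Metric.ball_mem_nhds y (by positivity : (0:ℝ) < 1/((n:ℝ)+1))))).exists
  refine ⟨h j, hSig j, u j, hu j, hj1, ?_⟩
  have htr : dist (S (h j) (u j)) z ≤ dist (S (h j) (u j)) y + dist z y := by
    rw [dist_comm z y]; exact dist_triangle _ _ _
  have h3 : dist (S (h j) (u j)) y < 1/((n:ℝ)+1) := mem_ball.1 hj2
  have h4 : dist (S (h j) (u j)) z < 1/((n:ℝ)+1) + 1/((n:ℝ)+1) := by linarith
  calc dist (S (h j) (u j)) z < 1/((n:ℝ)+1) + 1/((n:ℝ)+1) := h4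
    _ = 2/((n:ℝ)+1) := by ring

lemma aux_attracts_K (hK : IsCompact K)
    (hKattr : IsAttractingSet S Sig Bor K) (hKBor : K ∈ Bor) {ε : ℝ} (hε : 0 < ε) :
    ∃ D : ℝ, 0 < D ∧ ∀ g ∈ Sig, infDist g (frontier Sig) ≥ D →
      S g '' K ⊆ thickening ε (omegaSet S Sig K) := by
  by_contra hcon
  push_neg at hcon
  have key : ∀ n : ℕ, ∃ g ∈ Sig, ∃ x ∈ K,
      ((n:ℝ)+1) ≤ infDist g (frontier Sig) ∧ S g x ∉ thickening ε (omegaSet S Sig K) := by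
    intro n
    obtain ⟨g, hg, hd, hns⟩ := hcon ((n:ℝ)+1) (by positivity)
    obtain ⟨a, ha, hna⟩ := Set.not_subset.1 hns
    obtain ⟨x, hx, rfl⟩ := ha
    exact ⟨g, hg, x, hx, hd, hna⟩
  choose g hg x hx h1 h2 using key
  set z : ℕ → Φ := fun n => S (g n) (x n) with hzdef
  have hKne : K.Nonempty := ⟨x 0, hx 0⟩
  have hginf : Tendsto (fun n => infDist (g n) (frontier Sig)) atTop atTop :=
    tendsto_atTop_mono h1 aux_cast_tendsto
  have hinf0 : Tendsto (fun n => infDist (z n) K) atTop (𝓝 0) := by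
    rw [tendsto_order]
    constructor
    · intro a ha
      exact Eventually.of_forall fun n => lt_of_lt_of_le ha infDist_nonneg
    · intro δ hδ
      obtain ⟨D, hD, hattr⟩ := hKattr K hKBor δ hδ
      filter_upwards [hginf.eventually_ge_atTop D] with n hn
      have hmem := hattr (g n) (hg n) hn ⟨x n, hx n, rfl⟩
      rw [mem_thickening_iff] at hmem
      obtain ⟨y, hy, hdy⟩ := hmem
      exact lt_of_le_of_lt (infDist_le_dist_of_mem hy) hdy
  have hdist : ∀ n : ℕ, ∃ k ∈ K, dist (z n) k < infDist (z n) K + 1/((n:ℝ)+1) := by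
    intro n
    refine (infDist_lt_iff hKne).1 ?_
    have : (0:ℝ) < 1/((n:ℝ)+1) := by positivity
    linarith
  choose k hk hdk using hdist
  have hdk0 : Tendsto (fun n => dist (z n) (k n)) atTop (𝓝 0) := by
    have hsum : Tendsto (fun n => infDist (z n) K + 1/((n:ℝ)+1)) atTop (𝓝 0) := by
      simpa using hinf0.add aux_inv_div_tendsto
    exact squeeze_zero (fun n => dist_nonneg) (fun n => (hdk n).le) hsum
  obtain ⟨a, haK, φ, hφ, hkφ⟩ := hK.tendsto_subseq hk
  have hzφ : Tendsto (fun n => z (φ n)) atTop (𝓝 a) := by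
    rw [tendsto_iff_dist_tendsto_zero]
    have h4 : Tendsto (fun n => dist (z (φ n)) (k (φ n)) + dist (k (φ n)) a) atTop (𝓝 0) := by
      simpa using (hdk0.comp hφ.tendsto_atTop).add (tendsto_iff_dist_tendsto_zero.1 hkφ)
    exact squeeze_zero (fun n => dist_nonneg) (fun n => dist_triangle _ _ _) h4
  have haω : a ∈ omegaSet S Sig K :=
    ⟨g ∘ φ, x ∘ φ, fun n => hg _, hginf.comp hφ.tendsto_atTop, fun n => hx _, hzφ⟩
  obtain ⟨j, hj⟩ := (hzφ.eventually (eventually_mem_set.2 (Metric.ball_mem_nhds a hε))).exists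
  exact h2 (φ j) (mem_thickening_iff.2 ⟨a, haω, mem_ball.1 hj⟩)

lemma aux_shift_mem {f h : EuclideanSpace ℝ (Fin m)} (hf : f ∈ Sig)
    (hd : ‖h‖ + 1 ≤ infDist f (frontier Sig)) :
    f + h ∈ Sig ∧ f - h ∈ Sig := by
  have hD : (0:ℝ) < infDist f (frontier Sig) :=
    lt_of_lt_of_le (by positivity) hd
  have hball := aux_ball_subset hD hf le_rfl
  constructor
  · apply hball
    rw [mem_ball, dist_eq_norm]
    simp only [add_sub_cancel_left]
    linarith [norm_nonneg h]
  · apply hball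
    rw [mem_ball, dist_eq_norm]
    simp only [sub_sub_cancel_left, norm_neg]
    linarith [norm_nonneg h]

lemma aux_shift_infDist (s : Set (EuclideanSpace ℝ (Fin m)))
    (f h : EuclideanSpace ℝ (Fin m)) :
    infDist f s - ‖h‖ ≤ infDist (f + h) s := by
  have := infDist_le_infDist_add_dist (x := f) (y := f + h) (s := s)
  rw [dist_eq_norm] at this
  simp only [sub_add_cancel_left, norm_neg] at this
  linarith

lemma aux_shift_infDist' (s : Set (EuclideanSpace ℝ (Fin m)))
    (f h : EuclideanSpace ℝ (Fin m)) :
    infDist f s - ‖h‖ ≤ infDist (f - h) s := by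
  have := aux_shift_infDist s f (-h)
  simpa [sub_eq_add_neg] using this

lemma aux_invariance (hSigC : Sig ⊆ C)
    (hSadd : ∀ h₁ ∈ C, ∀ h₂ ∈ C, S (h₁ + h₂) = S h₁ ∘ S h₂)
    (hScont : ∀ h ∈ C, Continuous (S h))
    (hK : IsCompact K) (hKattr : IsAttractingSet S Sig Bor K) (hKBor : K ∈ Bor)
    {h : EuclideanSpace ℝ (Fin m)} (hh : h ∈ C) :
    S h '' omegaSet S Sig K = omegaSet S Sig K := by
  apply subset_antisymm
  · rintro _ ⟨z, hz, rfl⟩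
    obtain ⟨f, u, hfSig, hinf, hu, ht⟩ := hz
    obtain ⟨N, hN⟩ := eventually_atTop.1 (hinf.eventually_ge_atTop (‖h‖ + 1))
    refine ⟨fun n => f (n+N) + h, fun n => u (n+N), ?_, ?_, fun n => hu _, ?_⟩
    · exact fun n => (aux_shift_mem (hfSig _) (hN _ (Nat.le_add_left N n))).1
    · refine tendsto_atTop_mono (fun n => aux_shift_infDist _ _ _) ?_
      have h1 : Tendsto (fun n => infDist (f (n+N)) (frontier Sig)) atTop atTop :=
        hinf.comp (tendsto_add_atTop_nat N)
      simpa [sub_eq_add_neg] using tendsto_atTop_add_const_right atTop (-‖h‖) h1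
    · have hbase : Tendsto (fun n => S h (S (f (n+N)) (u (n+N)))) atTop (𝓝 (S h z)) :=
        ((hScont h hh).tendsto z).comp (ht.comp (tendsto_add_atTop_nat N))
      refine hbase.congr fun n => ?_
      show S h (S (f (n+N)) (u (n+N))) = S (f (n+N) + h) (u (n+N))
      rw [add_comm (f (n+N)) h, hSadd h hh (f (n+N)) (hSigC (hfSig _))]
      rfl
  · intro z hz
    obtain ⟨f, u, hfSig, hinf, hu, ht⟩ := hz
    obtain ⟨N, hN⟩ := eventually_atTop.1 (hinf.eventually_ge_atTop (‖h‖ + 1))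
    set G : ℕ → EuclideanSpace ℝ (Fin m) := fun n => f (n+N) - h with hGdef
    have hGSig : ∀ n, G n ∈ Sig :=
      fun n => (aux_shift_mem (hfSig _) (hN _ (Nat.le_add_left N n))).2
    have hGinf : Tendsto (fun n => infDist (G n) (frontier Sig)) atTop atTop := by
      refine tendsto_atTop_mono (fun n => aux_shift_infDist' _ _ _) ?_
      have h1 : Tendsto (fun n => infDist (f (n+N)) (frontier Sig)) atTop atTop :=
        hinf.comp (tendsto_add_atTop_nat N)
      simpa [sub_eq_add_neg] using tendsto_atTop_add_const_right atTop (-‖h‖) h1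
    set v : ℕ → Φ := fun n => S (G n) (u (n+N)) with hvdef
    have hSv : ∀ n, S h (v n) = S (f (n+N)) (u (n+N)) := by
      intro n
      have heq : h + G n = f (n+N) := by simp [hGdef]
      rw [show S (f (n+N)) = S (h + G n) by rw [heq],
        hSadd h hh (G n) (hSigC (hGSig n))]
      rfl
    have hKne : K.Nonempty := ⟨u 0, hu 0⟩
    have hinf0 : Tendsto (fun n => infDist (v n) K) atTop (𝓝 0) := by
      rw [tendsto_order]
      constructor
      · intro a ha
        exact Eventually.of_forall fun n => lt_of_lt_of_le ha infDist_nonneg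
      · intro δ hδ
        obtain ⟨D, hD, hattr⟩ := hKattr K hKBor δ hδ
        filter_upwards [hGinf.eventually_ge_atTop D] with n hn
        have hmem := hattr (G n) (hGSig n) hn ⟨u (n+N), hu _, rfl⟩
        rw [mem_thickening_iff] at hmem
        obtain ⟨y, hy, hdy⟩ := hmem
        exact lt_of_le_of_lt (infDist_le_dist_of_mem hy) hdy
    have hdist : ∀ n : ℕ, ∃ k ∈ K, dist (v n) k < infDist (v n) K + 1/((n:ℝ)+1) := by
      intro n
      refine (infDist_lt_iff hKne).1 ?_
      have : (0:ℝ) < 1/((n:ℝ)+1) := by positivity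
      linarith
    choose k hk hdk using hdist
    have hdk0 : Tendsto (fun n => dist (v n) (k n)) atTop (𝓝 0) := by
      have hsum : Tendsto (fun n => infDist (v n) K + 1/((n:ℝ)+1)) atTop (𝓝 0) := by
        simpa using hinf0.add aux_inv_div_tendsto
      exact squeeze_zero (fun n => dist_nonneg) (fun n => (hdk n).le) hsum
    obtain ⟨a, haK, φ, hφ, hkφ⟩ := hK.tendsto_subseq hk
    have hvφ : Tendsto (fun n => v (φ n)) atTop (𝓝 a) := by
      rw [tendsto_iff_dist_tendsto_zero]
      have h4 : Tendsto (fun n => dist (v (φ n)) (k (φ n)) + dist (k (φ n)) a) atTop (𝓝 0) := by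
        simpa using (hdk0.comp hφ.tendsto_atTop).add (tendsto_iff_dist_tendsto_zero.1 hkφ)
      exact squeeze_zero (fun n => dist_nonneg) (fun n => dist_triangle _ _ _) h4
    have haω : a ∈ omegaSet S Sig K :=
      ⟨G ∘ φ, (fun n => u (n+N)) ∘ φ, fun n => hGSig _, hGinf.comp hφ.tendsto_atTop,
        fun n => hu _, hvφ⟩
    have hlim1 : Tendsto (fun n => S h (v (φ n))) atTop (𝓝 (S h a)) :=
      ((hScont h hh).tendsto a).comp hvφ
    have hlim2 : Tendsto (fun n => S h (v (φ n))) atTop (𝓝 z) := by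
      have hc : Tendsto (fun n => S (f (φ n + N)) (u (φ n + N))) atTop (𝓝 z) :=
        (ht.comp (tendsto_add_atTop_nat N)).comp hφ.tendsto_atTop
      exact hc.congr fun n => (hSv (φ n)).symm
    exact ⟨a, haω, tendsto_nhds_unique hlim1 hlim2⟩

lemma aux_omega_attracting (hSigC : Sig ⊆ C)
    (hSadd : ∀ h₁ ∈ C, ∀ h₂ ∈ C, S (h₁ + h₂) = S h₁ ∘ S h₂)
    (hScont : ∀ h ∈ C, Continuous (S h))
    (hcof : ∀ D : ℝ, 0 < D → ∃ h ∈ Sig, infDist h (frontier Sig) ≥ D)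
    (hK : IsCompact K) (hKattr : IsAttractingSet S Sig Bor K) (hKBor : K ∈ Bor) :
    IsAttractingSet S Sig Bor (omegaSet S Sig K) := by
  intro B hB ε hε
  obtain ⟨D₁, hD₁, hattr1⟩ := aux_attracts_K hK hKattr hKBor hε
  obtain ⟨g₀, hg₀, hdg₀⟩ := hcof D₁ hD₁
  set U : Set Φ := S g₀ ⁻¹' (thickening ε (omegaSet S Sig K)) with hUdef
  have hUopen : IsOpen U := isOpen_thickening.preimage (hScont g₀ (hSigC hg₀))
  have hKU : K ⊆ U := fun x hx => hattr1 g₀ hg₀ hdg₀ ⟨x, hx, rfl⟩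
  obtain ⟨δ, hδ, hthick⟩ := hK.exists_thickening_subset_open hUopen hKU
  obtain ⟨D₂, hD₂, hattr2⟩ := hKattr B hB δ hδ
  refine ⟨D₂ + ‖g₀‖ + 1, by positivity, fun h hh hd => ?_⟩
  have hDpos : (0:ℝ) < D₂ + ‖g₀‖ + 1 := by positivity
  have hball := aux_ball_subset hDpos hh hd
  have hgSig : h - g₀ ∈ Sig := by
    apply hball
    rw [mem_ball, dist_eq_norm]
    simp only [sub_sub_cancel_left, norm_neg]
    linarith
  have hdist2 : infDist (h - g₀) (frontier Sig) ≥ D₂ := by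
    have hl := infDist_le_infDist_add_dist (x := h) (y := h - g₀) (s := frontier Sig)
    rw [dist_eq_norm] at hl
    simp only [sub_sub_cancel, norm_neg] at hl
    have hd' : infDist h (frontier Sig) ≥ D₂ + ‖g₀‖ + 1 := hd
    linarith
  rintro _ ⟨b, hb, rfl⟩
  have hmem : S (h - g₀) b ∈ thickening δ K := hattr2 (h - g₀) hgSig hdist2 ⟨b, hb, rfl⟩
  have hU : S (h - g₀) b ∈ U := hthick hmem
  have heq : S h b = S g₀ (S (h - g₀) b) := by
    rw [show S h = S (g₀ + (h - g₀)) by rw [add_sub_cancel],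
      hSadd g₀ (hSigC hg₀) (h - g₀) (hSigC hgSig)]
    rfl
  rw [heq]
  exact hU

lemma aux_traj (hCcone : ∀ t : ℝ, 0 ≤ t → ∀ h ∈ C, t • h ∈ C)
    (hS0 : S 0 = id)
    (hSadd : ∀ h₁ ∈ C, ∀ h₂ ∈ C, S (h₁ + h₂) = S h₁ ∘ S h₂)
    (hCint : (interior C).Nonempty)
    {A : Set Φ} (hinv : ∀ h ∈ C, S h '' A = A) (hAK : A ⊆ K) (hKBor : K ∈ Bor)
    {z : Φ} (hz : z ∈ A) :
    ∃ u : EuclideanSpace ℝ (Fin m) → Φ,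
      IsCompleteBoundedTrajectory S C Bor u ∧ u 0 = z := by
  classical
  obtain ⟨ξ, hξ⟩ := hCint
  obtain ⟨r, hr, hball⟩ := Metric.mem_nhds_iff.1 (isOpen_interior.mem_nhds hξ)
  have hξC : ξ ∈ C := interior_subset hξ
  have hmemC : ∀ (s : EuclideanSpace ℝ (Fin m)) (n : ℕ), ‖s‖ < n * r →
      s + (n:ℝ) • ξ ∈ C := by
    intro s n hn
    have hn0 : (0:ℝ) < n := by nlinarith [norm_nonneg s]
    have hmb : ξ + (n:ℝ)⁻¹ • s ∈ ball ξ r := by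
      rw [mem_ball, dist_eq_norm]
      simp only [add_sub_cancel_left, norm_smul, norm_inv, Real.norm_natCast]
      rw [inv_mul_lt_iff₀ hn0]
      linarith
    have hmem := hCcone (n:ℝ) hn0.le _ (interior_subset (hball hmb))
    have heq : (n:ℝ) • (ξ + (n:ℝ)⁻¹ • s) = s + (n:ℝ) • ξ := by
      rw [smul_add, smul_inv_smul₀ hn0.ne']
      abel
    rwa [heq] at hmem
  set N : EuclideanSpace ℝ (Fin m) → ℕ := fun s => ⌈‖s‖ / r⌉₊ + 1 with hNdef
  have hNlt : ∀ s, ‖s‖ < (N s) * r := by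
    intro s
    have h1 : ‖s‖ / r ≤ ⌈‖s‖ / r⌉₊ := Nat.le_ceil _
    have h2 : (⌈‖s‖ / r⌉₊ : ℝ) < N s := by
      rw [hNdef]; push_cast; linarith
    have h3 : ‖s‖ / r < N s := lt_of_le_of_lt h1 h2
    rwa [div_lt_iff₀ hr] at h3
  have hNmem : ∀ s, s + (N s : ℝ) • ξ ∈ C := fun s => hmemC s (N s) (hNlt s)
  have hmono : ∀ (s : EuclideanSpace ℝ (Fin m)) (n : ℕ), ‖s‖ < n * r → ∀ p : ℕ, n ≤ p →
      ‖s‖ < p * r := by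
    intro s n hn p hp
    have hc : (n:ℝ) * r ≤ p * r := by
      have : (n:ℝ) ≤ p := by exact_mod_cast hp
      nlinarith
    linarith
  have hpre : ∀ y ∈ A, ∃ x ∈ A, S ξ x = y := by
    intro y hy
    rw [← hinv ξ hξC] at hy
    obtain ⟨x, hx, hxe⟩ := hy
    exact ⟨x, hx, hxe⟩
  choose pre hpre1 hpre2 using hpre
  let w : ℕ → {x : Φ // x ∈ A} := fun n =>
    Nat.rec (⟨z, hz⟩ : {x : Φ // x ∈ A}) (fun _ p => ⟨pre p.1 p.2, hpre1 p.1 p.2⟩) n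
  have hw0 : (w 0).1 = z := rfl
  have hwS : ∀ n, S ξ (w (n+1)).1 = (w n).1 := fun n => hpre2 (w n).1 (w n).2
  have hL1 : ∀ (k n : ℕ), S ((k:ℝ) • ξ) (w (n+k)).1 = (w n).1 := by
    intro k
    induction k with
    | zero => intro n; simp [hS0]
    | succ k ih =>
      intro n
      have hkC : (k:ℝ) • ξ ∈ C := hCcone _ (Nat.cast_nonneg k) ξ hξC
      have hcast : ((k+1:ℕ):ℝ) • ξ = (k:ℝ) • ξ + ξ := by
        push_cast; rw [add_smul, one_smul]
      rw [hcast, hSadd _ hkC _ hξC]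
      show S ((k:ℝ) • ξ) (S ξ (w ((n+k)+1)).1) = (w n).1
      rw [hwS (n+k)]
      exact ih n
  have hL2' : ∀ (s : EuclideanSpace ℝ (Fin m)) (n p : ℕ), n ≤ p →
      s + (n:ℝ) • ξ ∈ C →
      S (s + (p:ℝ) • ξ) (w p).1 = S (s + (n:ℝ) • ξ) (w n).1 := by
    intro s n p hnp hn
    have hsplit : s + (p:ℝ) • ξ = (s + (n:ℝ) • ξ) + ((p-n:ℕ):ℝ) • ξ := by
      rw [add_assoc, ← add_smul]
      congr 2
      push_cast [Nat.cast_sub hnp]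
      ring
    have hkC : ((p-n:ℕ):ℝ) • ξ ∈ C := hCcone _ (Nat.cast_nonneg _) ξ hξC
    rw [hsplit, hSadd _ hn _ hkC]
    show S (s + (n:ℝ) • ξ) (S (((p-n:ℕ):ℝ) • ξ) (w p).1) = _
    have hidx : w p = w (n + (p - n)) := by rw [Nat.add_sub_cancel' hnp]
    rw [hidx, hL1 (p-n) n]
  set u : EuclideanSpace ℝ (Fin m) → Φ := fun s => S (s + (N s : ℝ) • ξ) (w (N s)).1
    with hudef
  have hL2 : ∀ (s : EuclideanSpace ℝ (Fin m)) (n : ℕ), s + (n:ℝ) • ξ ∈ C →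
      S (s + (n:ℝ) • ξ) (w n).1 = u s := by
    intro s n hn
    rw [← hL2' s n (max n (N s)) (le_max_left _ _) hn,
      hL2' s (N s) (max n (N s)) (le_max_right _ _) (hNmem s)]
  have hrange : ∀ s, u s ∈ A := by
    intro s
    rw [← hinv _ (hNmem s)]
    exact ⟨(w (N s)).1, (w (N s)).2, rfl⟩
  refine ⟨u, ⟨?_, K, hKBor, ?_⟩, ?_⟩
  · intro h hh s
    set n := max (N s) (N (s+h)) with hndef
    have h1 : s + (n:ℝ) • ξ ∈ C :=
      hmemC s n (hmono s (N s) (hNlt s) n (le_max_left _ _))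
    have h2 : (s+h) + (n:ℝ) • ξ ∈ C :=
      hmemC (s+h) n (hmono (s+h) (N (s+h)) (hNlt (s+h)) n (le_max_right _ _))
    rw [← hL2 s n h1, ← hL2 (s+h) n h2]
    rw [show (s+h) + (n:ℝ) • ξ = h + (s + (n:ℝ) • ξ) by abel, hSadd h hh _ h1]
    rfl
  · rintro x ⟨s, rfl⟩
    exact hAK (hrange s)
  · have h0 : (0 : EuclideanSpace ℝ (Fin m)) + (N 0 : ℝ) • ξ = (N 0 : ℝ) • ξ := zero_add _
    rw [hudef]
    show S ((0 : EuclideanSpace ℝ (Fin m)) + (N 0 : ℝ) • ξ) (w (N 0)).1 = z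
    rw [h0]
    have hfin := hL1 (N 0) 0
    rw [Nat.zero_add] at hfin
    rw [hfin]
    exact hw0

end Aux

/-- If all `S h` are continuous and `K` is a compact `(𝔹,Σ)`-attracting set with `K ∈ 𝔹`,
then `ω(K)` is a `(𝔹,Σ)`-attractor and `ω(K) = 𝒦|₀`. -/
theorem omegaSet_of_attracting_set_isAttractor
    {m : ℕ} {Φ : Type*} [MetricSpace Φ] (hm : 1 ≤ m)
    (C Sig : Set (EuclideanSpace ℝ (Fin m)))
    (S : EuclideanSpace ℝ (Fin m) → Φ → Φ) (Bor : Set (Set Φ))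
    (hCclosed : IsClosed C) (hCint : (interior C).Nonempty)
    (hC0 : (0 : EuclideanSpace ℝ (Fin m)) ∈ C)
    (hCadd : ∀ h₁ ∈ C, ∀ h₂ ∈ C, h₁ + h₂ ∈ C)
    (hCcone : ∀ t : ℝ, 0 ≤ t → ∀ h ∈ C, t • h ∈ C)
    (hS0 : S 0 = id)
    (hSadd : ∀ h₁ ∈ C, ∀ h₂ ∈ C, S (h₁ + h₂) = S h₁ ∘ S h₂)
    (hScont : ∀ h ∈ C, Continuous (S h))
    (hSigne : Sig.Nonempty) (hSigC : Sig ⊆ C)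
    (hfr : frontier C ⊆ frontier Sig)
    (hcof : ∀ D : ℝ, 0 < D → ∃ h ∈ Sig, infDist h (frontier Sig) ≥ D)
    (K : Set Φ) (hK : IsCompact K) (hKattr : IsAttractingSet S Sig Bor K)
    (hKBor : K ∈ Bor) :
    IsAttractor S C Sig Bor (omegaSet S Sig K) ∧
    omegaSet S Sig K = {u₀ | ∃ u : EuclideanSpace ℝ (Fin m) → Φ,
      IsCompleteBoundedTrajectory S C Bor u ∧ u 0 = u₀} := by
  have hωsub : omegaSet S Sig K ⊆ K := aux_omega_subset hK.isClosed hKattr hKBor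
  have hωcomp : IsCompact (omegaSet S Sig K) :=
    hK.of_isClosed_subset aux_omega_closed hωsub
  have hωinv : ∀ h ∈ C, S h '' omegaSet S Sig K = omegaSet S Sig K :=
    fun h hh => aux_invariance hSigC hSadd hScont hK hKattr hKBor hh
  refine ⟨⟨hωcomp, hωinv, aux_omega_attracting hSigC hSadd hScont hcof hK hKattr hKBor⟩, ?_⟩
  ext z
  simp only [Set.mem_setOf_eq]
  constructor
  · intro hz
    exact aux_traj hCcone hS0 hSadd hCint hωinv hωsub hKBor hz
  · rintro ⟨u, ⟨htraj, Bu, hBu, hrange⟩, rfl⟩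
    have huK : ∀ s, u s ∈ K := by
      intro s
      have key : ∀ δ : ℝ, 0 < δ → ∃ y ∈ K, dist (u s) y < δ := by
        intro δ hδ
        obtain ⟨D, hD, hattr⟩ := hKattr Bu hBu δ hδ
        obtain ⟨f, hf, hdf⟩ := hcof D hD
        have heq : u s = S f (u (s - f)) := by
          rw [htraj f (hSigC hf) (s - f), sub_add_cancel]
        have hmem : u s ∈ thickening δ K := by
          rw [heq]; exact hattr f hf hdf ⟨u (s-f), hrange ⟨s-f, rfl⟩, rfl⟩
        exact mem_thickening_iff.1 hmem
      obtain ⟨y0, hy0, _⟩ := key 1 one_pos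
      rw [hK.isClosed.mem_iff_infDist_zero ⟨y0, hy0⟩]
      refine le_antisymm (le_of_forall_pos_le_add fun ε hε => ?_) infDist_nonneg
      obtain ⟨y, hy, hdy⟩ := key ε hε
      have hle : infDist (u s) K ≤ dist (u s) y := infDist_le_dist_of_mem hy
      linarith
    have key2 : ∀ n : ℕ, ∃ H ∈ Sig, ((n:ℝ)+1) ≤ infDist H (frontier Sig) := by
      intro n
      obtain ⟨H, hH, hd⟩ := hcof ((n:ℝ)+1) (by positivity)
      exact ⟨H, hH, hd⟩
    choose H hH hdH using key2
    refine ⟨H, fun n => u (-(H n)), hH, tendsto_atTop_mono hdH aux_cast_tendsto,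
      fun n => huK _, ?_⟩
    have hconst : ∀ n, S (H n) (u (-(H n))) = u 0 := by
      intro n
      rw [htraj (H n) (hSigC (hH n)) (-(H n)), neg_add_cancel]
    exact tendsto_const_nhds.congr fun n => (hconst n).symm
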